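/- For propositional formulas T₁, …, T_n (with finite supports), the conjunction T₁ ∧ T₂ ∧ ⋯ ∧ T_n is unsatisfiable if and only if there exists an inductive sequence of interpolants, i.e., formulas I₀, I₁, …, I_n such that: (1) I₀ = true and I_n = false; (2) for all i ∈ {1, …, n}, the entailment I_{i-1} ∧ T_i ⊨ I_i holds; and (3) for all i ∈ {0, …, n}, supp(I_i) ⊆ (supp(T₁) ∪ ⋯ ∪ supp(T_i)) ∩ (supp(T_{i+1}) ∪ ⋯ ∪ supp(T_n)). -/

import Mathlib

/-- A propositional formula over variables `X`, modelled as a predicate on valuations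
`X → Bool` together with a finite support on which the formula depends. -/
structure PropFormula (X : Type) where
  /-- Satisfaction: whether a valuation makes the formula true. -/
  sat : (X → Bool) → Prop
  /-- The (finite) support of the formula. -/
  supp : Finset X
  /-- The formula depends only on the variables in its support. -/
  supp_spec : ∀ v w : X → Bool, (∀ x ∈ supp, v x = w x) → (sat v ↔ sat w)

/-- Left part of the interpolant support. -/
def Aset {X : Type} [DecidableEq X] {n : ℕ} (T : Fin n → PropFormula X)
    (i : Fin (n + 1)) : Finset X :=
  (Finset.univ.filter (fun j : Fin n => (j : ℕ) < (i : ℕ))).biUnion fun j => (T j).supp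

/-- Right part of the interpolant support. -/
def Bset {X : Type} [DecidableEq X] {n : ℕ} (T : Fin n → PropFormula X)
    (i : Fin (n + 1)) : Finset X :=
  (Finset.univ.filter (fun j : Fin n => (i : ℕ) ≤ (j : ℕ))).biUnion fun j => (T j).supp

/-- For propositional formulas `T 0, …, T (n-1)`, the conjunction `T 0 ∧ ⋯ ∧ T (n-1)` is
unsatisfiable if and only if there is an inductive sequence of interpolants
`I 0, …, I n`: (1) `I 0` is `true` and `I n` is `false`; (2) for every `i < n`,
`I i ∧ T i ⊨ I (i+1)`; (3) for every `i ≤ n`,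
`supp (I i) ⊆ (supp (T 0) ∪ ⋯ ∪ supp (T (i-1))) ∩ (supp (T i) ∪ ⋯ ∪ supp (T (n-1)))`. -/
theorem inductive_interpolant_sequence_iff_unsat {X : Type} [DecidableEq X]
    (n : ℕ) (T : Fin n → PropFormula X) :
    (¬ ∃ val : X → Bool, ∀ i : Fin n, (T i).sat val) ↔
      ∃ I : Fin (n + 1) → PropFormula X,
        (∀ val : X → Bool, (I 0).sat val) ∧
        (∀ val : X → Bool, ¬ (I (Fin.last n)).sat val) ∧
        (∀ i : Fin n, ∀ val : X → Bool,
            (I i.castSucc).sat val → (T i).sat val → (I i.succ).sat val) ∧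
        (∀ i : Fin (n + 1),
            (I i).supp ⊆
              ((Finset.univ.filter (fun j : Fin n => (j : ℕ) < (i : ℕ))).biUnion
                  fun j => (T j).supp) ∩
                ((Finset.univ.filter (fun j : Fin n => (i : ℕ) ≤ (j : ℕ))).biUnion
                  fun j => (T j).supp)) := by
  classical
  constructor
  · intro hunsat
    refine ⟨fun i =>
      { sat := fun v => ∃ w : X → Bool,
          (∀ x ∈ Aset T i ∩ Bset T i, w x = v x) ∧
          ∀ j : Fin n, (j : ℕ) < (i : ℕ) → (T j).sat w
        supp := Aset T i ∩ Bset T i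
        supp_spec := by
          intro v v' h
          constructor
          · rintro ⟨w, hw, hs⟩
            exact ⟨w, fun x hx => (hw x hx).trans (h x hx), hs⟩
          · rintro ⟨w, hw, hs⟩
            exact ⟨w, fun x hx => (hw x hx).trans (h x hx).symm, hs⟩ }, ?_, ?_, ?_, ?_⟩
    · intro val
      exact ⟨val, fun x _ => rfl, fun j hj => absurd hj (by simp)⟩
    · rintro val ⟨w, _, hs⟩
      exact hunsat ⟨w, fun j => hs j (by simp)⟩
    · rintro i val ⟨w, hw, hs⟩ hT
      refine ⟨fun x => if x ∈ Aset T i.castSucc then w x else val x, ?_, ?_⟩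
      · intro x hx
        rw [Finset.mem_inter] at hx
        by_cases hxa : x ∈ Aset T i.castSucc
        · simp only [hxa, if_pos]
          apply hw
          rw [Finset.mem_inter]
          refine ⟨hxa, ?_⟩
          simp only [Bset, Finset.mem_biUnion, Finset.mem_filter] at hx ⊢
          obtain ⟨j, ⟨_, hj⟩, hxj⟩ := hx.2
          exact ⟨j, ⟨Finset.mem_univ j, by simp only [Fin.coe_castSucc, Fin.val_succ] at hj ⊢; omega⟩, hxj⟩
        · simp [hxa]
      · intro j hj
        rcases lt_or_eq_of_le (Nat.lt_succ_iff.mp (show (j : ℕ) < (i : ℕ).succ by simp only [Fin.val_succ] at hj; omega)) with hlt | heq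
        · rw [(T j).supp_spec _ w]
          · exact hs j (by simpa using hlt)
          · intro x hx
            have hxa : x ∈ Aset T i.castSucc := by
              simp only [Aset, Finset.mem_biUnion, Finset.mem_filter]
              exact ⟨j, ⟨Finset.mem_univ j, by simpa using hlt⟩, hx⟩
            simp [hxa]
        · rw [(T j).supp_spec _ val]
          · rw [show j = i from Fin.ext heq]; exact hT
          · intro x hx
            by_cases hxa : x ∈ Aset T i.castSucc
            · simp only [hxa, if_pos]
              apply hw
              rw [Finset.mem_inter]
              refine ⟨hxa, ?_⟩
              simp only [Bset, Finset.mem_biUnion, Finset.mem_filter]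
              exact ⟨j, ⟨Finset.mem_univ j, by simp only [Fin.coe_castSucc, Fin.val_succ] at heq ⊢; omega⟩, hx⟩
            · simp [hxa]
    · intro i
      exact Finset.Subset.refl _
  · rintro ⟨I, h0, hn, hstep, _⟩ ⟨val, hval⟩
    have key : ∀ i : Fin (n + 1), (I i).sat val := by
      intro i
      induction i using Fin.induction with
      | zero => exact h0 val
      | succ j ih => exact hstep j val ih (hval j)
    exact hn val (key (Fin.last n))
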